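/- Equivalence between the Steklov–Poincaré equation and the transmission problem: if (u₁,u₂) ∈ W₁×W₂ solves the transmission problem (subdomain equations a_i(u_i,v_i)=⟨f_i,v_i⟩ for v_i ∈ W̃_i⁰, trace matching T₁u₁ = T₂u₂, and flux matching Σ_i a_i(u_i,F_iμ) − ⟨f_i,F_iμ⟩ = 0 for all μ ∈ Z), then η = T_iu_i solves Sη = χ in Z*. Conversely, if η ∈ Z solves Sη = χ, then (F₁η + G₁f₁, F₂η + G₂f₂) solves the transmission problem. -/
import Mathlib


/-- Equivalence between the Steklov–Poincaré equation `Sη = χ` and the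
transmission problem.  Abstractly: `a_i : W_i × W̃_i → ℝ` are the subdomain forms (`ι_i` the
inclusions `W_i ⊆ W̃_i`, `e_i : W̃_i⁰ → W̃_i` the zero-trace test functions), `T_i` the
traces, `F_i` the homogeneous solution operators (`T_iF_iη = η`, `a_i(F_iη, e_i v) = 0`),
and `g_i = G_if_i` the zero-trace solution operators applied to the sources
(`a_i(g_i, e_i v) = ⟨f_i, e_i v⟩`, `T_i g_i = 0`); `huniq_i` is the uniqueness of subdomain
solutions (coercivity of `a_i`).  With `⟨S_iη,μ⟩ = a_i(F_iη, F_iμ)` and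
`⟨χ_i,μ⟩ = ⟨f_i,F_iμ⟩ − a_i(G_if_i,F_iμ)`:
if `(u₁,u₂)` solves the transmission problem then `η = T₁u₁` solves `Sη = χ`; conversely if
`η` solves `Sη = χ` then `(F₁η + G₁f₁, F₂η + G₂f₂)` solves the transmission problem. -/
theorem stmt_19 {Z W1 W2 W1' W2' W10' W20' : Type*}
    [AddCommGroup Z] [Module ℝ Z]
    [AddCommGroup W1] [Module ℝ W1] [AddCommGroup W2] [Module ℝ W2]
    [AddCommGroup W1'] [Module ℝ W1'] [AddCommGroup W2'] [Module ℝ W2']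
    [AddCommGroup W10'] [Module ℝ W10'] [AddCommGroup W20'] [Module ℝ W20']
    (a1 : W1 →ₗ[ℝ] W1' →ₗ[ℝ] ℝ) (a2 : W2 →ₗ[ℝ] W2' →ₗ[ℝ] ℝ)
    (f1 : W1' →ₗ[ℝ] ℝ) (f2 : W2' →ₗ[ℝ] ℝ)
    (ι1 : W1 →ₗ[ℝ] W1') (ι2 : W2 →ₗ[ℝ] W2')
    (e1 : W10' →ₗ[ℝ] W1') (e2 : W20' →ₗ[ℝ] W2')
    (T1 : W1 →ₗ[ℝ] Z) (T2 : W2 →ₗ[ℝ] Z)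
    (F1 : Z →ₗ[ℝ] W1) (F2 : Z →ₗ[ℝ] W2)
    (g1 : W1) (g2 : W2)          -- `g_i = G_i f_i`
    (hF1T : ∀ η : Z, T1 (F1 η) = η) (hF2T : ∀ η : Z, T2 (F2 η) = η)
    (hF1hom : ∀ (η : Z) (v : W10'), a1 (F1 η) (e1 v) = 0)
    (hF2hom : ∀ (η : Z) (v : W20'), a2 (F2 η) (e2 v) = 0)
    (hg1 : ∀ v : W10', a1 g1 (e1 v) = f1 (e1 v))
    (hg2 : ∀ v : W20', a2 g2 (e2 v) = f2 (e2 v))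
    (hg1T : T1 g1 = 0) (hg2T : T2 g2 = 0)
    (huniq1 : ∀ u u' : W1,
      (∀ v : W10', a1 u (e1 v) = a1 u' (e1 v)) → T1 u = T1 u' → u = u')
    (huniq2 : ∀ u u' : W2,
      (∀ v : W20', a2 u (e2 v) = a2 u' (e2 v)) → T2 u = T2 u' → u = u') :
    (∀ (u1 : W1) (u2 : W2),
      (∀ v : W10', a1 u1 (e1 v) = f1 (e1 v)) →
      (∀ v : W20', a2 u2 (e2 v) = f2 (e2 v)) →
      T1 u1 = T2 u2 →
      (∀ μ : Z, (a1 u1 (ι1 (F1 μ)) - f1 (ι1 (F1 μ))) +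
                (a2 u2 (ι2 (F2 μ)) - f2 (ι2 (F2 μ))) = 0) →
      ∀ μ : Z,
        a1 (F1 (T1 u1)) (ι1 (F1 μ)) + a2 (F2 (T1 u1)) (ι2 (F2 μ))
          = (f1 (ι1 (F1 μ)) - a1 g1 (ι1 (F1 μ))) +
            (f2 (ι2 (F2 μ)) - a2 g2 (ι2 (F2 μ)))) ∧
    (∀ η : Z,
      (∀ μ : Z,
        a1 (F1 η) (ι1 (F1 μ)) + a2 (F2 η) (ι2 (F2 μ))
          = (f1 (ι1 (F1 μ)) - a1 g1 (ι1 (F1 μ))) +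
            (f2 (ι2 (F2 μ)) - a2 g2 (ι2 (F2 μ)))) →
      ((∀ v : W10', a1 (F1 η + g1) (e1 v) = f1 (e1 v)) ∧
       (∀ v : W20', a2 (F2 η + g2) (e2 v) = f2 (e2 v)) ∧
       T1 (F1 η + g1) = T2 (F2 η + g2) ∧
       (∀ μ : Z, (a1 (F1 η + g1) (ι1 (F1 μ)) - f1 (ι1 (F1 μ))) +
                 (a2 (F2 η + g2) (ι2 (F2 μ)) - f2 (ι2 (F2 μ))) = 0))) := by
  constructor
  · intro u1 u2 h1 h2 hT hflux μ
    have hu1 : u1 = F1 (T1 u1) + g1 := by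
      apply huniq1
      · intro v; simp [hF1hom, hg1, h1 v]
      · simp [hF1T, hg1T]
    have hu2 : u2 = F2 (T1 u1) + g2 := by
      apply huniq2
      · intro v; simp [hF2hom, hg2, h2 v]
      · simp [hF2T, hg2T, hT]
    have := hflux μ
    rw [hu1, hu2] at this
    simp only [map_add, LinearMap.add_apply] at this
    linarith
  · intro η hη
    refine ⟨fun v => by simp [hF1hom, hg1], fun v => by simp [hF2hom, hg2],
      by simp [hF1T, hF2T, hg1T, hg2T], fun μ => ?_⟩
    have := hη μ
    simp only [map_add, LinearMap.add_apply]
    linarith
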